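/- Let I₂, I₃ > 0, let β : ℝ³ → ℝ³ be the linear map β(P₁,P₂,P₃) = (P₁/I₂, P₂/I₂, P₃/I₃), and let δ = (0,0,δ₃) with δ₃ ∈ ℝ. Then for every P ∈ ℝ³ and every g ∈ SO(3), the third components of P × β(P) and of (g⁻¹ eᵢ) × δ (for i = 1,2,3, where e₁,e₂,e₃ is the standard basis) are all zero. Consequently, along any solution t ↦ (g(t), P(t)) of the controlled rigid body equations ġ = g·A(βP), Ṗ = P × βP + Σᵢ uᵢ(t)(g⁻¹eᵢ) × δ with measurable bounded controls uᵢ, the quantity P₃(t) is constant. -/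

import Mathlib

open Matrix

/-- The inertia map `β(P) = (P₁/I₂, P₂/I₂, P₃/I₃)`. -/
noncomputable def inertiaMap (I₂ I₃ : ℝ) (P : Fin 3 → ℝ) : Fin 3 → ℝ :=
  ![P 0 / I₂, P 1 / I₂, P 2 / I₃]

/-- The hat map sending `P ∈ ℝ³` to the skew-symmetric matrix `A(P)`. -/
noncomputable def hatMap (P : Fin 3 → ℝ) : Matrix (Fin 3) (Fin 3) ℝ :=
  !![0, -P 2, P 1; P 2, 0, -P 0; -P 1, P 0, 0]

/-- For a genuine symmetric top (`δ = (0,0,δ₃)`), the third components of `P × βP` and of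
`(g⁻¹eᵢ) × δ` vanish, and consequently `P₃` is a conserved quantity of the controlled
Euler equations `ġ = g A(βP)`, `Ṗ = P × βP + Σᵢ uᵢ (g⁻¹eᵢ) × δ`. -/
theorem genuine_symmetric_top_P3_conserved
    (I₂ I₃ : ℝ) (hI₂ : 0 < I₂) (hI₃ : 0 < I₃) (δ₃ : ℝ) :
    let δ : Fin 3 → ℝ := ![0, 0, δ₃]
    (∀ P : Fin 3 → ℝ, (P ⨯₃ inertiaMap I₂ I₃ P) 2 = 0) ∧
    (∀ g : Matrix (Fin 3) (Fin 3) ℝ, g ∈ Matrix.specialOrthogonalGroup (Fin 3) ℝ →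
      ∀ i : Fin 3, ((g⁻¹ *ᵥ Pi.single i 1) ⨯₃ δ) 2 = 0) ∧
    (∀ (u : Fin 3 → ℝ → ℝ) (g : ℝ → Matrix (Fin 3) (Fin 3) ℝ) (P : ℝ → Fin 3 → ℝ),
      (∀ i, Measurable (u i)) → (∀ i, ∃ C, ∀ t, |u i t| ≤ C) →
      (∀ t, g t ∈ Matrix.specialOrthogonalGroup (Fin 3) ℝ) →
      (∀ t i j, HasDerivAt (fun τ => g τ i j)
        ((g t * hatMap (inertiaMap I₂ I₃ (P t))) i j) t) →
      (∀ t i, HasDerivAt (fun τ => P τ i)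
        ((P t ⨯₃ inertiaMap I₂ I₃ (P t)
          + ∑ l : Fin 3, u l t • (((g t)⁻¹ *ᵥ Pi.single l 1) ⨯₃ δ)) i) t) →
      ∀ t s : ℝ, P t 2 = P s 2) := by
  intro δ
  have h1 : ∀ P : Fin 3 → ℝ, (P ⨯₃ inertiaMap I₂ I₃ P) 2 = 0 := by
    intro P
    simp [cross_apply, inertiaMap]
    ring
  have h2 : ∀ v : Fin 3 → ℝ, (v ⨯₃ δ) 2 = 0 := by
    intro v
    simp [cross_apply, δ]
  refine ⟨h1, fun g _ i => h2 _, ?_⟩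
  intro u g P _ _ _ _ hP t s
  have key : ∀ τ, HasDerivAt (fun τ => P τ 2) 0 τ := by
    intro τ
    have := hP τ 2
    simpa [h1, h2, Pi.add_apply, Finset.sum_apply, Pi.smul_apply] using this
  have : ∀ a b : ℝ, P a 2 = P b 2 := by
    intro a b
    have := is_const_of_deriv_eq_zero (f := fun τ => P τ 2) ?_ ?_ a b
    · exact this
    · exact fun x => (key x).differentiableAt
    · intro x; exact (key x).deriv
  exact this t s
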